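/- Any polynomial in the single-mode Fibonacci creation and annihilation operators α, α†, β, β† reduces, using the single-mode relations, to a polynomial of degree at most 4: the algebra generated by α and β (concrete 5×5 matrices) is spanned by monomials in α, α†, β, β† of length ≤ 4. -/

import Mathlib

open Matrix

/-- `A = |0⟩⟨1|`. -/
def fibA : Matrix (Fin 5) (Fin 5) ℂ := Matrix.single 0 1 1
/-- `B₁ = |2⟩⟨3|`. -/
def fibB₁ : Matrix (Fin 5) (Fin 5) ℂ := Matrix.single 2 3 1
/-- `B₂ = |4⟩⟨3|`. -/
def fibB₂ : Matrix (Fin 5) (Fin 5) ℂ := Matrix.single 4 3 1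

/-- Single-mode Fibonacci annihilation operator `α = (1/√2)A + B₁`. -/
noncomputable def fibα : Matrix (Fin 5) (Fin 5) ℂ :=
  ((1 / Real.sqrt 2 : ℝ) : ℂ) • fibA + fibB₁
/-- Single-mode Fibonacci annihilation operator `β = (1/√2)A + B₂`. -/
noncomputable def fibβ : Matrix (Fin 5) (Fin 5) ℂ :=
  ((1 / Real.sqrt 2 : ℝ) : ℂ) • fibA + fibB₂

noncomputable abbrev fibc : ℂ := ((1 / Real.sqrt 2 : ℝ) : ℂ)

lemma fib_hcc : fibc * fibc = 1/2 := by
  rw [show fibc = ((1 / Real.sqrt 2 : ℝ) : ℂ) from rfl, ← Complex.ofReal_mul]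
  rw [show (1 / Real.sqrt 2) * (1 / Real.sqrt 2) = 1/2 by
    rw [div_mul_div_comm, Real.mul_self_sqrt (by norm_num : (0:ℝ) ≤ 2)]; norm_num]
  norm_num

lemma fib_stdH (i j : Fin 5) (v : ℂ) :
    (Matrix.single i j v)ᴴ = Matrix.single j i ((starRingEnd ℂ) v) := by
  ext a b
  simp [Matrix.single, Matrix.conjTranspose_apply, and_comm, apply_ite (starRingEnd ℂ)]

lemma fib_hcc2 : (((Real.sqrt 2 : ℝ)) : ℂ)⁻¹ * (((Real.sqrt 2 : ℝ)) : ℂ)⁻¹ = 2⁻¹ := by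
  rw [← mul_inv, ← Complex.ofReal_mul, Real.mul_self_sqrt (by norm_num : (0:ℝ) ≤ 2)]
  norm_num

lemma fib_hαH : fibαᴴ = fibc • Matrix.single 1 0 1 + Matrix.single 3 2 1 := by
  simp [fibα, fibA, fibB₁, conjTranspose_add, conjTranspose_smul, fib_stdH,
    map_inv₀, Complex.conj_ofReal]

lemma fib_hβH : fibβᴴ = fibc • Matrix.single 1 0 1 + Matrix.single 3 4 1 := by
  simp [fibβ, fibA, fibB₂, conjTranspose_add, conjTranspose_smul, fib_stdH,
    map_inv₀, Complex.conj_ofReal]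

noncomputable def fibP : Matrix (Fin 5) (Fin 5) ℂ := fibαᴴ * fibα
noncomputable def fibQ : Matrix (Fin 5) (Fin 5) ℂ := fibαᴴ * fibβ

lemma fib_hP : fibP = (1/2 : ℂ) • Matrix.single 1 1 1 + Matrix.single 3 3 1 := by
  simp [fibP, fib_hαH, fibα, fibA, fibB₁, add_mul, mul_add, smul_mul_assoc,
    mul_smul_comm, smul_smul, fib_hcc, fib_hcc2, fib_stdH, map_inv₀, Complex.conj_ofReal]

lemma fib_hQ : fibQ = (1/2 : ℂ) • Matrix.single 1 1 1 := by
  simp [fibQ, fib_hαH, fibβ, fibA, fibB₂, add_mul, mul_add, smul_mul_assoc,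
    mul_smul_comm, smul_smul, fib_hcc, fib_hcc2, fib_stdH, map_inv₀, Complex.conj_ofReal]

lemma fib_ann_zero : ∀ x ∈ ({fibα, fibβ} : Set (Matrix (Fin 5) (Fin 5) ℂ)),
    ∀ y ∈ ({fibα, fibβ} : Set (Matrix (Fin 5) (Fin 5) ℂ)), x * y = 0 := by
  rintro x (rfl|rfl) y (rfl|rfl) <;>
    simp [fibα, fibβ, fibA, fibB₁, fibB₂, add_mul, mul_add, smul_mul_assoc, mul_smul_comm]

lemma fib_cr_zero : ∀ x ∈ ({fibαᴴ, fibβᴴ} : Set (Matrix (Fin 5) (Fin 5) ℂ)),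
    ∀ y ∈ ({fibαᴴ, fibβᴴ} : Set (Matrix (Fin 5) (Fin 5) ℂ)), x * y = 0 := by
  rintro x (rfl|rfl) y (rfl|rfl) <;>
    rw [← conjTranspose_mul] <;>
    rw [fib_ann_zero _ (by simp) _ (by simp)] <;> simp

lemma fib_yx : ∀ y ∈ ({fibαᴴ, fibβᴴ} : Set (Matrix (Fin 5) (Fin 5) ℂ)),
    ∀ x ∈ ({fibα, fibβ} : Set (Matrix (Fin 5) (Fin 5) ℂ)),
    y * x = fibP ∨ y * x = fibQ := by
  rintro y (rfl|rfl) x (rfl|rfl)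
  · exact Or.inl rfl
  · exact Or.inr rfl
  · refine Or.inr ?_
    rw [fib_hQ]
    simp [fib_hβH, fibα, fibA, fibB₁, add_mul, mul_add, smul_mul_assoc,
      mul_smul_comm, smul_smul, fib_hcc, fib_hcc2, fib_stdH, map_inv₀, Complex.conj_ofReal]
  · refine Or.inl ?_
    rw [fib_hP]
    simp [fib_hβH, fibβ, fibA, fibB₂, add_mul, mul_add, smul_mul_assoc,
      mul_smul_comm, smul_smul, fib_hcc, fib_hcc2, fib_stdH, map_inv₀, Complex.conj_ofReal]

lemma fib_PQmul :
    fibP * fibP = (1:ℂ) • fibP + (-(1/2):ℂ) • fibQ ∧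
    fibP * fibQ = (0:ℂ) • fibP + (1/2:ℂ) • fibQ ∧
    fibQ * fibP = (0:ℂ) • fibP + (1/2:ℂ) • fibQ ∧
    fibQ * fibQ = (0:ℂ) • fibP + (1/2:ℂ) • fibQ := by
  refine ⟨?_, ?_, ?_, ?_⟩ <;>
  · rw [fib_hP, fib_hQ]
    simp [add_mul, mul_add, smul_mul_assoc, mul_smul_comm, smul_smul, smul_add]
    try norm_num
    try (ext a b; simp [Matrix.single]; split_ifs <;> norm_num)

lemma fib_PQ : ∀ u ∈ ({fibP, fibQ} : Set (Matrix (Fin 5) (Fin 5) ℂ)),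
    ∀ v ∈ ({fibP, fibQ} : Set (Matrix (Fin 5) (Fin 5) ℂ)),
    ∃ s t : ℂ, u * v = s • fibP + t • fibQ := by
  rintro u (rfl|rfl) v (rfl|rfl)
  · exact ⟨_, _, fib_PQmul.1⟩
  · exact ⟨_, _, fib_PQmul.2.1⟩
  · exact ⟨_, _, fib_PQmul.2.2.1⟩
  · exact ⟨_, _, fib_PQmul.2.2.2⟩

namespace FibAux

abbrev Mat := Matrix (Fin 5) (Fin 5) ℂ
abbrev G : Set Mat := {fibα, fibαᴴ, fibβ, fibβᴴ}
abbrev Ann : Set Mat := {fibα, fibβ}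
abbrev Cr : Set Mat := {fibαᴴ, fibβᴴ}

lemma classify : ∀ g ∈ G, g ∈ Ann ∨ g ∈ Cr := by
  rintro g (rfl|rfl|rfl|rfl) <;> simp [Ann, Cr]

lemma annG : Ann ⊆ G := by rintro g (rfl|rfl) <;> simp [G]
lemma crG : Cr ⊆ G := by rintro g (rfl|rfl) <;> simp [G]

/-- reducibility to two monomials of length ≤ 3 -/
def Red (w : Mat) : Prop :=
  ∃ (s t : ℂ) (M1 M2 : List Mat), (∀ x ∈ M1, x ∈ G) ∧ (∀ x ∈ M2, x ∈ G) ∧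
    M1.length ≤ 3 ∧ M2.length ≤ 3 ∧ w = s • M1.prod + t • M2.prod

lemma red_zero {w : Mat} (h : w = 0) : Red w :=
  ⟨0, 0, [], [], by simp, by simp, by simp, by simp, by simp [h]⟩

lemma mz {x y : Mat} (h : x * y = 0) (z : Mat) : x * (y * z) = 0 := by
  rw [← mul_assoc, h, zero_mul]

lemma zred12 {g1 g2 : Mat} (g3 g4 g5 : Mat) (h : g1 * g2 = 0) :
    Red (g1 * (g2 * (g3 * (g4 * g5)))) := red_zero (mz h _)

lemma zred23 (g1 : Mat) {g2 g3 : Mat} (g4 g5 : Mat) (h : g2 * g3 = 0) :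
    Red (g1 * (g2 * (g3 * (g4 * g5)))) := red_zero (by rw [mz h (g4 * g5), mul_zero])

lemma zred34 (g1 g2 : Mat) {g3 g4 : Mat} (g5 : Mat) (h : g3 * g4 = 0) :
    Red (g1 * (g2 * (g3 * (g4 * g5)))) :=
  red_zero (by rw [mz h g5, mul_zero, mul_zero])

lemma zred45 (g1 g2 g3 : Mat) {g4 g5 : Mat} (h : g4 * g5 = 0) :
    Red (g1 * (g2 * (g3 * (g4 * g5)))) :=
  red_zero (by rw [h, mul_zero, mul_zero, mul_zero])

lemma hPdef : fibαᴴ * fibα = fibP := rfl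
lemma hQdef : fibαᴴ * fibβ = fibQ := rfl

lemma memPQ {y x : Mat} (hy : y ∈ Cr) (hx : x ∈ Ann) :
    y * x ∈ ({fibP, fibQ} : Set Mat) := by
  rcases fib_yx y hy x hx with h | h <;> simp [h]

lemma red5A {x1 y1 x2 y2 x3 : Mat} (hx1 : x1 ∈ Ann) (hy1 : y1 ∈ Cr) (hx2 : x2 ∈ Ann)
    (hy2 : y2 ∈ Cr) (hx3 : x3 ∈ Ann) : Red (x1 * (y1 * (x2 * (y2 * x3)))) := by
  obtain ⟨s, t, hst⟩ := fib_PQ _ (memPQ hy1 hx2) _ (memPQ hy2 hx3)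
  refine ⟨s, t, [x1, fibαᴴ, fibα], [x1, fibαᴴ, fibβ],
    ?_, ?_, by simp, by simp, ?_⟩
  · intro x hx
    simp only [List.mem_cons, List.not_mem_nil, or_false] at hx
    rcases hx with rfl | rfl | rfl
    · exact annG hx1
    · simp [G]
    · simp [G]
  · intro x hx
    simp only [List.mem_cons, List.not_mem_nil, or_false] at hx
    rcases hx with rfl | rfl | rfl
    · exact annG hx1
    · simp [G]
    · simp [G]
  · simp only [List.prod_cons, List.prod_nil, mul_one]
    rw [show x1 * (y1 * (x2 * (y2 * x3))) = x1 * ((y1 * x2) * (y2 * x3)) by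
      rw [mul_assoc]]
    rw [hst]
    simp only [mul_add, mul_smul_comm, hPdef, hQdef]

lemma red5C {y1 x1 y2 x2 y3 : Mat} (hy1 : y1 ∈ Cr) (hx1 : x1 ∈ Ann) (hy2 : y2 ∈ Cr)
    (hx2 : x2 ∈ Ann) (hy3 : y3 ∈ Cr) : Red (y1 * (x1 * (y2 * (x2 * y3)))) := by
  obtain ⟨s, t, hst⟩ := fib_PQ _ (memPQ hy1 hx1) _ (memPQ hy2 hx2)
  refine ⟨s, t, [fibαᴴ, fibα, y3], [fibαᴴ, fibβ, y3],
    ?_, ?_, by simp, by simp, ?_⟩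
  · intro x hx
    simp only [List.mem_cons, List.not_mem_nil, or_false] at hx
    rcases hx with rfl | rfl | rfl
    · simp [G]
    · simp [G]
    · exact crG hy3
  · intro x hx
    simp only [List.mem_cons, List.not_mem_nil, or_false] at hx
    rcases hx with rfl | rfl | rfl
    · simp [G]
    · simp [G]
    · exact crG hy3
  · simp only [List.prod_cons, List.prod_nil, mul_one]
    simp only [← mul_assoc] at hst ⊢
    rw [hst]
    simp only [add_mul, smul_mul_assoc, hPdef, hQdef]

lemma annmul {x y : Mat} (hx : x ∈ Ann) (hy : y ∈ Ann) : x * y = 0 :=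
  fib_ann_zero x hx y hy

lemma crmul {x y : Mat} (hx : x ∈ Cr) (hy : y ∈ Cr) : x * y = 0 :=
  fib_cr_zero x hx y hy

lemma reduce5 {g1 g2 g3 g4 g5 : Mat} (h1 : g1 ∈ G) (h2 : g2 ∈ G) (h3 : g3 ∈ G)
    (h4 : g4 ∈ G) (h5 : g5 ∈ G) : Red (g1 * (g2 * (g3 * (g4 * g5)))) := by
  rcases classify g1 h1 with h1 | h1 <;>
  rcases classify g2 h2 with h2 | h2 <;>
  rcases classify g3 h3 with h3 | h3 <;>
  rcases classify g4 h4 with h4 | h4 <;>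
  rcases classify g5 h5 with h5 | h5 <;>
  first
    | exact red5A h1 h2 h3 h4 h5
    | exact red5C h1 h2 h3 h4 h5
    | exact zred12 _ _ _ (annmul h1 h2)
    | exact zred12 _ _ _ (crmul h1 h2)
    | exact zred23 _ _ _ (annmul h2 h3)
    | exact zred23 _ _ _ (crmul h2 h3)
    | exact zred34 _ _ _ (annmul h3 h4)
    | exact zred34 _ _ _ (crmul h3 h4)
    | exact zred45 _ _ _ (annmul h4 h5)
    | exact zred45 _ _ _ (crmul h4 h5)

/-- The monomial set of the statement. -/
def S : Set Mat :=
  {m : Mat | ∃ L : List Mat, (∀ x ∈ L, x ∈ G) ∧ L.length ≤ 4 ∧ m = L.prod}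

lemma main : ∀ n (L : List Mat), L.length ≤ n → (∀ x ∈ L, x ∈ G) →
    L.prod ∈ Submodule.span ℂ S := by
  intro n
  induction n using Nat.strong_induction_on with
  | _ n ih =>
    intro L hlen hmem
    by_cases h4 : L.length ≤ 4
    · exact Submodule.subset_span ⟨L, hmem, h4, rfl⟩
    · obtain _ | ⟨g1, _ | ⟨g2, _ | ⟨g3, _ | ⟨g4, _ | ⟨g5, T⟩⟩⟩⟩⟩ := L
      · exact absurd (by simp) h4
      · exact absurd (by simp) h4
      · exact absurd (by simp) h4
      · exact absurd (by simp) h4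
      · exact absurd (by simp) h4
      · have h1 : g1 ∈ G := hmem _ (by simp)
        have h2 : g2 ∈ G := hmem _ (by simp)
        have h3 : g3 ∈ G := hmem _ (by simp)
        have h4' : g4 ∈ G := hmem _ (by simp)
        have h5 : g5 ∈ G := hmem _ (by simp)
        have hT : ∀ x ∈ T, x ∈ G := fun x hx => hmem _ (by simp [hx])
        obtain ⟨s, t, M1, M2, hM1, hM2, l1, l2, heq⟩ :=
          reduce5 h1 h2 h3 h4' h5
        have key : (g1 :: g2 :: g3 :: g4 :: g5 :: T).prod =
            (g1 * (g2 * (g3 * (g4 * g5)))) * T.prod := by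
          simp [List.prod_cons, mul_assoc]
        rw [key, heq, add_mul, smul_mul_assoc, smul_mul_assoc,
          ← List.prod_append, ← List.prod_append]
        have hn : 5 + T.length ≤ n := by simp [List.length_cons] at hlen; omega
        refine Submodule.add_mem _ (Submodule.smul_mem _ _ ?_) (Submodule.smul_mem _ _ ?_)
        · exact ih (n - 1) (by omega) _ (by simp; omega) (by
            intro x hx
            rcases List.mem_append.mp hx with h | h
            · exact hM1 x h
            · exact hT x h)
        · exact ih (n - 1) (by omega) _ (by simp; omega) (by
            intro x hx
            rcases List.mem_append.mp hx with h | h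
            · exact hM2 x h
            · exact hT x h)

lemma span_mul_mem {x y : Mat} (hx : x ∈ Submodule.span ℂ S) (hy : y ∈ Submodule.span ℂ S) :
    x * y ∈ Submodule.span ℂ S := by
  induction hx using Submodule.span_induction with
  | mem a ha =>
    induction hy using Submodule.span_induction with
    | mem b hb =>
      obtain ⟨La, hLa, _, rfl⟩ := ha
      obtain ⟨Lb, hLb, _, rfl⟩ := hb
      rw [← List.prod_append]
      refine main (La ++ Lb).length _ le_rfl ?_
      intro x hx
      rcases List.mem_append.mp hx with h | h
      · exact hLa x h
      · exact hLb x h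
    | zero => simpa using Submodule.zero_mem _
    | add b c _ _ hb hc => rw [mul_add]; exact Submodule.add_mem _ hb hc
    | smul r b _ hb => rw [mul_smul_comm]; exact Submodule.smul_mem _ _ hb
  | zero => simpa using Submodule.zero_mem _
  | add a b _ _ ha hb => rw [add_mul]; exact Submodule.add_mem _ ha hb
  | smul r a _ ha => rw [smul_mul_assoc]; exact Submodule.smul_mem _ _ ha

end FibAux

/-- The algebra generated by the single-mode Fibonacci creation and annihilation
operators is spanned by monomials in `α, α†, β, β†` of length at most 4. -/
theorem fib_single_mode_degree_four :
    (Algebra.adjoin ℂ ({fibα, fibαᴴ, fibβ, fibβᴴ} :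
        Set (Matrix (Fin 5) (Fin 5) ℂ))).toSubmodule =
      Submodule.span ℂ
        {m : Matrix (Fin 5) (Fin 5) ℂ |
          ∃ L : List (Matrix (Fin 5) (Fin 5) ℂ),
            (∀ x ∈ L, x ∈ ({fibα, fibαᴴ, fibβ, fibβᴴ} :
              Set (Matrix (Fin 5) (Fin 5) ℂ))) ∧
            L.length ≤ 4 ∧ m = L.prod} := by
  have hSS : {m : Matrix (Fin 5) (Fin 5) ℂ |
      ∃ L : List (Matrix (Fin 5) (Fin 5) ℂ),
        (∀ x ∈ L, x ∈ ({fibα, fibαᴴ, fibβ, fibβᴴ} :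
          Set (Matrix (Fin 5) (Fin 5) ℂ))) ∧
        L.length ≤ 4 ∧ m = L.prod} = FibAux.S := rfl
  rw [hSS]
  apply le_antisymm
  · intro x hx
    have hx' : x ∈ Algebra.adjoin ℂ FibAux.G := hx
    clear hx
    induction hx' using Algebra.adjoin_induction with
    | mem g hg =>
      exact Submodule.subset_span ⟨[g], by simpa using hg, by simp, by simp⟩
    | algebraMap r =>
      rw [Algebra.algebraMap_eq_smul_one]
      exact Submodule.smul_mem _ _
        (Submodule.subset_span ⟨[], by simp, by simp, by simp⟩)
    | add a b _ _ ha hb => exact Submodule.add_mem _ ha hb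
    | mul a b _ _ ha hb => exact FibAux.span_mul_mem ha hb
  · rw [Submodule.span_le]
    rintro m ⟨L, hL, _, rfl⟩
    exact Subalgebra.list_prod_mem _ (fun x hx => Algebra.subset_adjoin (hL x hx))
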